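/- Let O ⊆ ℝⁿ be open, let f₁, f₂ : O → ℝⁿ be C¹ vector fields, let h : O → ℝ be of class C², and let φ : O → ℝⁿ be a C² diffeomorphism onto its (open) image. Define the transformed data on φ(O) by h̃ := h ∘ φ⁻¹ and f̃ᵢ(φ(x)) := Dφ(x) fᵢ(x) for i = 1,2. Let S(x) be the 2×2 symmetric matrix with entries S_{ℓm}(x) = ½ ∇h(x)·(Df_ℓ(x) f_m(x) + Df_m(x) f_ℓ(x)) + f_ℓ(x)·D²h(x) f_m(x), and let S̃ be defined in the same way from h̃, f̃₁, f̃₂. Then S̃(φ(x)) = S(x) for every x ∈ O. -/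

import Mathlib

open MeasureTheory Set

noncomputable section

/-- `n`-dimensional Euclidean space. -/
abbrev Euc (n : ℕ) : Type := EuclideanSpace ℝ (Fin n)

/-- The Lie bracket `[f₁, f₂] := Df₂ f₁ − Df₁ f₂`. -/
def lieBracket {n : ℕ} (f₁ f₂ : Euc n → Euc n) (x : Euc n) : Euc n :=
  fderiv ℝ f₂ x (f₁ x) - fderiv ℝ f₁ x (f₂ x)

/-- Entries of the matrix `S(x)`:
`S_{ℓm}(x) = ½ ∇h(x)·(Df_ℓ(x) f_m(x) + Df_m(x) f_ℓ(x)) + f_ℓ(x)·D²h(x) f_m(x)`. -/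
def Smat {n : ℕ} (f₁ f₂ : Euc n → Euc n) (h : Euc n → ℝ) (x : Euc n) (l m : Fin 2) : ℝ :=
  (1 / 2) * fderiv ℝ h x (fderiv ℝ (![f₁, f₂] l) x (![f₁, f₂] m x)
      + fderiv ℝ (![f₁, f₂] m) x (![f₁, f₂] l x))
    + fderiv ℝ (fun y => fderiv ℝ h y (![f₁, f₂] m x)) x (![f₁, f₂] l x)

/-- The quadratic form `𝐒(x)` associated to the symmetric matrix `S(x)`. -/
def Sform {n : ℕ} (f₁ f₂ : Euc n → Euc n) (h : Euc n → ℝ) (x : Euc n) (w : Fin 2 → ℝ) : ℝ :=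
  ∑ l : Fin 2, ∑ m : Fin 2, Smat f₁ f₂ h x l m * w l * w m

/-- The singular set `𝕊 = {x ∈ C : ∇h·f₁ = ∇h·f₂ = 0}`. -/
def singSet {n : ℕ} (f₁ f₂ : Euc n → Euc n) (h : Euc n → ℝ) : Set (Euc n) :=
  {x | h x ≤ 0 ∧ fderiv ℝ h x (f₁ x) = 0 ∧ fderiv ℝ h x (f₂ x) = 0}

/-- Hypothesis (H1): `f₁, f₂` are `C²`, Lipschitz with a common constant, and
`‖f₁ x‖ + ‖f₂ x‖` is uniformly bounded. -/
def H1 {n : ℕ} (f₁ f₂ : Euc n → Euc n) : Prop :=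
  ContDiff ℝ 2 f₁ ∧ ContDiff ℝ 2 f₂ ∧
    (∃ kf : NNReal, LipschitzWith kf f₁ ∧ LipschitzWith kf f₂) ∧
    ∃ k₀ : ℝ, ∀ x, ‖f₁ x‖ + ‖f₂ x‖ ≤ k₀

/-- Hypothesis (H3): `h` is `C^{2,1}`, Lipschitz, `C = {h ≤ 0}` is nonempty and
`∇h ≠ 0` on `{h = 0}`. -/
def H3 {n : ℕ} (h : Euc n → ℝ) : Prop :=
  ContDiff ℝ 2 h ∧ (∃ M : NNReal, LipschitzWith M (iteratedFDeriv ℝ 2 h)) ∧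
    (∃ kh : NNReal, LipschitzWith kh h) ∧ (∃ x, h x ≤ 0) ∧
    ∀ x, h x = 0 → fderiv ℝ h x ≠ 0

/-- Hypothesis (H4): transversality of the Lie bracket on the singular set. -/
def H4 {n : ℕ} (f₁ f₂ : Euc n → Euc n) (h : Euc n → ℝ) : Prop :=
  ∃ α > 0, ∀ x ∈ singSet f₁ f₂ h, α < |fderiv ℝ h x (lieBracket f₁ f₂ x)|

/-- Hypothesis (H5): on the singular set, `𝐒(x)` is negative semidefinite or indefinite. -/
def H5 {n : ℕ} (f₁ f₂ : Euc n → Euc n) (h : Euc n → ℝ) : Prop :=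
  ∀ x ∈ singSet f₁ f₂ h,
    (∀ w : Fin 2 → ℝ, Sform f₁ f₂ h x w ≤ 0) ∨
      ((∃ w : Fin 2 → ℝ, Sform f₁ f₂ h x w < 0) ∧ (∃ w : Fin 2 → ℝ, 0 < Sform f₁ f₂ h x w))

/-- Hypothesis (H6): near the singular set,
`√((∇h·f₁)² + (∇h·f₂)²) ≥ d₀ · dist(x, 𝕊)`. -/
def H6 {n : ℕ} (f₁ f₂ : Euc n → Euc n) (h : Euc n → ℝ) : Prop :=
  ∃ δ > 0, ∃ d₀ > 0, ∀ x : Euc n, Metric.infDist x (singSet f₁ f₂ h) ≤ δ →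
    d₀ * Metric.infDist x (singSet f₁ f₂ h) ≤
      Real.sqrt ((fderiv ℝ h x (f₁ x)) ^ 2 + (fderiv ℝ h x (f₂ x)) ^ 2)

/-- `Dψ(φ z) ∘ Dφ(z) = id` for `z ∈ O`. -/
lemma comp_eq_id {n : ℕ} (O : Set (Euc n)) (hO : IsOpen O)
    (φ ψ : Euc n → Euc n)
    (hφ : ContDiffOn ℝ 2 φ O) (hφO : IsOpen (φ '' O))
    (hψ : ContDiffOn ℝ 2 ψ (φ '' O))
    (hinv₁ : ∀ x ∈ O, ψ (φ x) = x)
    (z : Euc n) (hz : z ∈ O) :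
    (fderiv ℝ ψ (φ z)).comp (fderiv ℝ φ z) = ContinuousLinearMap.id ℝ (Euc n) := by
  have hφz : HasFDerivAt φ (fderiv ℝ φ z) z :=
    ((hφ.contDiffAt (hO.mem_nhds hz)).differentiableAt (by norm_num)).hasFDerivAt
  have hmem : φ z ∈ φ '' O := ⟨z, hz, rfl⟩
  have hψz : HasFDerivAt ψ (fderiv ℝ ψ (φ z)) (φ z) :=
    ((hψ.contDiffAt (hφO.mem_nhds hmem)).differentiableAt (by norm_num)).hasFDerivAt
  have hcomp : HasFDerivAt (ψ ∘ φ) ((fderiv ℝ ψ (φ z)).comp (fderiv ℝ φ z)) z :=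
    hψz.comp z hφz
  have hid : HasFDerivAt (fun w : Euc n => w)
      ((fderiv ℝ ψ (φ z)).comp (fderiv ℝ φ z)) z := by
    apply hcomp.congr_of_eventuallyEq
    filter_upwards [hO.mem_nhds hz] with w hw
    exact (hinv₁ w hw).symm
  exact hid.unique (hasFDerivAt_id z)

/-- Second-derivative inverse identity:
`Dψ(φ x) (D²φ(x)(u,v)) + D²ψ(φ x)(Dφ(x)u, Dφ(x)v) = 0`. -/
lemma snd_inv {n : ℕ} (O : Set (Euc n)) (hO : IsOpen O)
    (φ ψ : Euc n → Euc n)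
    (hφ : ContDiffOn ℝ 2 φ O) (hφO : IsOpen (φ '' O))
    (hψ : ContDiffOn ℝ 2 ψ (φ '' O))
    (hinv₁ : ∀ x ∈ O, ψ (φ x) = x)
    (x : Euc n) (hx : x ∈ O) (u v : Euc n) :
    fderiv ℝ ψ (φ x) (fderiv ℝ (fderiv ℝ φ) x u v)
      + fderiv ℝ (fderiv ℝ ψ) (φ x) (fderiv ℝ φ x u) (fderiv ℝ φ x v) = 0 := by
  have hmem : φ x ∈ φ '' O := ⟨x, hx, rfl⟩
  have hA : HasFDerivAt φ (fderiv ℝ φ x) x :=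
    ((hφ.contDiffAt (hO.mem_nhds hx)).differentiableAt (by norm_num)).hasFDerivAt
  have hΦ'' : HasFDerivAt (fderiv ℝ φ) (fderiv ℝ (fderiv ℝ φ) x) x :=
    (((hφ.contDiffAt (hO.mem_nhds hx)).fderiv_right (by norm_num : (1 : WithTop ℕ∞) + 1 ≤ 2)).differentiableAt
      one_ne_zero).hasFDerivAt
  have hΨ'' : HasFDerivAt (fderiv ℝ ψ) (fderiv ℝ (fderiv ℝ ψ) (φ x)) (φ x) :=
    (((hψ.contDiffAt (hφO.mem_nhds hmem)).fderiv_right (by norm_num : (1 : WithTop ℕ∞) + 1 ≤ 2)).differentiableAt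
      one_ne_zero).hasFDerivAt
  -- derivative of `z ↦ Dψ(φ z)`
  have hc : HasFDerivAt (fun z => fderiv ℝ ψ (φ z))
      ((fderiv ℝ (fderiv ℝ ψ) (φ x)).comp (fderiv ℝ φ x)) x := hΨ''.comp x hA
  -- derivative of `K z := Dψ(φ z) ∘ Dφ(z)`
  have hK := hc.clm_comp hΦ''
  set K' := ((ContinuousLinearMap.compL ℝ (Euc n) (Euc n) (Euc n)) (fderiv ℝ ψ (φ x))).comp
        (fderiv ℝ (fderiv ℝ φ) x)
      + ((ContinuousLinearMap.compL ℝ (Euc n) (Euc n) (Euc n)).flip (fderiv ℝ φ x)).comp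
        ((fderiv ℝ (fderiv ℝ ψ) (φ x)).comp (fderiv ℝ φ x)) with hK'
  have hK0 : HasFDerivAt (fun _ : Euc n => ContinuousLinearMap.id ℝ (Euc n)) K' x := by
    apply hK.congr_of_eventuallyEq
    filter_upwards [hO.mem_nhds hx] with w hw
    exact (comp_eq_id O hO φ ψ hφ hφO hψ hinv₁ w hw).symm
  have hzero : K' = 0 := hK0.unique (hasFDerivAt_const _ x)
  have h0 : K' u v = 0 := by rw [hzero]; rfl
  rw [hK'] at h0
  simpa [ContinuousLinearMap.add_apply, ContinuousLinearMap.comp_apply,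
    ContinuousLinearMap.flip_apply, ContinuousLinearMap.compL_apply, add_comm] using h0

lemma key {n : ℕ} (O : Set (Euc n)) (hO : IsOpen O)
    (f g : Euc n → Euc n) (h : Euc n → ℝ) (φ ψ : Euc n → Euc n)
    (hf : ContDiffOn ℝ 1 f O) (hg : ContDiffOn ℝ 1 g O)
    (hh : ContDiffOn ℝ 2 h O)
    (hφ : ContDiffOn ℝ 2 φ O) (hφO : IsOpen (φ '' O))
    (hψ : ContDiffOn ℝ 2 ψ (φ '' O))
    (hinv₁ : ∀ x ∈ O, ψ (φ x) = x)
    (x : Euc n) (hx : x ∈ O) :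
    (1/2 : ℝ) * fderiv ℝ (h ∘ ψ) (φ x)
        (fderiv ℝ (fun y => fderiv ℝ φ (ψ y) (f (ψ y))) (φ x)
            (fderiv ℝ φ (ψ (φ x)) (g (ψ (φ x))))
          + fderiv ℝ (fun y => fderiv ℝ φ (ψ y) (g (ψ y))) (φ x)
            (fderiv ℝ φ (ψ (φ x)) (f (ψ (φ x)))))
      + fderiv ℝ (fun y => fderiv ℝ (h ∘ ψ) y (fderiv ℝ φ (ψ (φ x)) (g (ψ (φ x))))) (φ x)
          (fderiv ℝ φ (ψ (φ x)) (f (ψ (φ x))))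
      = (1/2 : ℝ) * fderiv ℝ h x (fderiv ℝ f x (g x) + fderiv ℝ g x (f x))
          + fderiv ℝ (fun z => fderiv ℝ h z (g x)) x (f x) := by
  have hψφ : ψ (φ x) = x := hinv₁ x hx
  have hmem : φ x ∈ φ '' O := ⟨x, hx, rfl⟩
  rw [hψφ]
  set Y := φ x with hY
  set A := fderiv ℝ φ x with hA_def
  set B := fderiv ℝ ψ Y with hB_def
  set F' := fderiv ℝ f x with hF_def
  set G' := fderiv ℝ g x with hG_def
  set H := fderiv ℝ h x with hH_def
  set H' := fderiv ℝ (fderiv ℝ h) x with hH'_def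
  set Φ'' := fderiv ℝ (fderiv ℝ φ) x with hΦ_def
  set Ψ'' := fderiv ℝ (fderiv ℝ ψ) Y with hΨ_def
  have hA : HasFDerivAt φ A x :=
    ((hφ.contDiffAt (hO.mem_nhds hx)).differentiableAt (by norm_num)).hasFDerivAt
  have hB : HasFDerivAt ψ B Y :=
    ((hψ.contDiffAt (hφO.mem_nhds hmem)).differentiableAt (by norm_num)).hasFDerivAt
  have hfx : HasFDerivAt f F' x :=
    ((hf.contDiffAt (hO.mem_nhds hx)).differentiableAt one_ne_zero).hasFDerivAt
  have hgx : HasFDerivAt g G' x :=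
    ((hg.contDiffAt (hO.mem_nhds hx)).differentiableAt one_ne_zero).hasFDerivAt
  have hH : HasFDerivAt h H x :=
    ((hh.contDiffAt (hO.mem_nhds hx)).differentiableAt (by norm_num)).hasFDerivAt
  have hH' : HasFDerivAt (fderiv ℝ h) H' x :=
    (((hh.contDiffAt (hO.mem_nhds hx)).fderiv_right (by norm_num : (1 : WithTop ℕ∞) + 1 ≤ 2)).differentiableAt
      one_ne_zero).hasFDerivAt
  have hΦ'' : HasFDerivAt (fderiv ℝ φ) Φ'' x :=
    (((hφ.contDiffAt (hO.mem_nhds hx)).fderiv_right (by norm_num : (1 : WithTop ℕ∞) + 1 ≤ 2)).differentiableAt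
      one_ne_zero).hasFDerivAt
  have hΨ'' : HasFDerivAt (fderiv ℝ ψ) Ψ'' Y :=
    (((hψ.contDiffAt (hφO.mem_nhds hmem)).fderiv_right (by norm_num : (1 : WithTop ℕ∞) + 1 ≤ 2)).differentiableAt
      one_ne_zero).hasFDerivAt
  -- B ∘ A = id
  have hBA : B.comp A = ContinuousLinearMap.id ℝ (Euc n) :=
    comp_eq_id O hO φ ψ hφ hφO hψ hinv₁ x hx
  have hBAv : ∀ v, B (A v) = v := by
    intro v
    have := congrArg (fun L : Euc n →L[ℝ] Euc n => L v) hBA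
    simpa using this
  -- symmetry of Φ''
  have hφev : ∀ᶠ z in nhds x, HasFDerivAt φ (fderiv ℝ φ z) z := by
    filter_upwards [hO.mem_nhds hx] with w hw
    exact ((hφ.contDiffAt (hO.mem_nhds hw)).differentiableAt (by norm_num)).hasFDerivAt
  have hsym : ∀ v w, Φ'' v w = Φ'' w v := fun v w =>
    second_derivative_symmetric_of_eventually hφev hΦ'' v w
  -- derivative of h ∘ ψ at Y
  have hHψY : HasFDerivAt h H (ψ Y) := by rw [hψφ]; exact hH
  have hhψ : HasFDerivAt (h ∘ ψ) (H.comp B) Y := hHψY.comp Y hB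
  -- derivative of y ↦ Dφ(ψ y) (f (ψ y)) at Y
  have hgf : HasFDerivAt (fun z => fderiv ℝ φ z (f z)) (A.comp F' + Φ''.flip (f x)) x :=
    hΦ''.clm_apply hfx
  have hgg : HasFDerivAt (fun z => fderiv ℝ φ z (g z)) (A.comp G' + Φ''.flip (g x)) x :=
    hΦ''.clm_apply hgx
  have hgfY : HasFDerivAt (fun z => fderiv ℝ φ z (f z)) (A.comp F' + Φ''.flip (f x)) (ψ Y) := by
    rw [hψφ]; exact hgf
  have hggY : HasFDerivAt (fun z => fderiv ℝ φ z (g z)) (A.comp G' + Φ''.flip (g x)) (ψ Y) := by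
    rw [hψφ]; exact hgg
  have hgfψ : HasFDerivAt (fun y' => fderiv ℝ φ (ψ y') (f (ψ y')))
      ((A.comp F' + Φ''.flip (f x)).comp B) Y := hgfY.comp Y hB
  have hggψ : HasFDerivAt (fun y' => fderiv ℝ φ (ψ y') (g (ψ y')))
      ((A.comp G' + Φ''.flip (g x)).comp B) Y := hggY.comp Y hB
  -- derivative of y ↦ D(h∘ψ)(y) (A (g x)) at Y
  have hH'Y : HasFDerivAt (fderiv ℝ h) H' (ψ Y) := by rw [hψφ]; exact hH'
  have hq : HasFDerivAt (fun y' => fderiv ℝ h (ψ y')) (H'.comp B) Y := hH'Y.comp Y hB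
  have hv : HasFDerivAt (fun y' => fderiv ℝ ψ y' (A (g x)))
      (B.comp (0 : Euc n →L[ℝ] Euc n) + Ψ''.flip (A (g x))) Y :=
    hΨ''.clm_apply (hasFDerivAt_const _ _)
  have ht' : HasFDerivAt (fun y' => fderiv ℝ h (ψ y') (fderiv ℝ ψ y' (A (g x))))
      (H.comp (B.comp (0 : Euc n →L[ℝ] Euc n) + Ψ''.flip (A (g x)))
        + (H'.comp B).flip (B (A (g x)))) Y := by
    have := hq.clm_apply hv
    rw [hψφ] at this
    exact this
  have ht : HasFDerivAt (fun y' => fderiv ℝ (h ∘ ψ) y' (A (g x)))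
      (H.comp (B.comp (0 : Euc n →L[ℝ] Euc n) + Ψ''.flip (A (g x)))
        + (H'.comp B).flip (B (A (g x)))) Y := by
    apply ht'.congr_of_eventuallyEq
    filter_upwards [hφO.mem_nhds hmem] with w hw
    obtain ⟨z, hz, rfl⟩ := hw
    have hψw : ψ (φ z) = z := hinv₁ z hz
    have hdh : DifferentiableAt ℝ h (ψ (φ z)) := by
      rw [hψw]
      exact (hh.contDiffAt (hO.mem_nhds hz)).differentiableAt (by norm_num)
    have hdψ : DifferentiableAt ℝ ψ (φ z) :=
      (hψ.contDiffAt (hφO.mem_nhds ⟨z, hz, rfl⟩)).differentiableAt (by norm_num)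
    rw [fderiv_comp (φ z) hdh hdψ]
    rfl
  -- RHS second term
  have hrhs2 : HasFDerivAt (fun z => fderiv ℝ h z (g x))
      (H.comp (0 : Euc n →L[ℝ] Euc n) + H'.flip (g x)) x :=
    hH'.clm_apply (hasFDerivAt_const _ _)
  -- key cancellation
  have hkey : H (B (Φ'' (f x) (g x))) + H (Ψ'' (A (f x)) (A (g x))) = 0 := by
    have h6 : B (Φ'' (f x) (g x)) + Ψ'' (A (f x)) (A (g x)) = 0 :=
      snd_inv O hO φ ψ hφ hφO hψ hinv₁ x hx (f x) (g x)
    rw [← map_add, h6, map_zero]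
  rw [hhψ.fderiv, hgfψ.fderiv, hggψ.fderiv, ht.fderiv, hrhs2.fderiv]
  simp only [ContinuousLinearMap.add_apply, ContinuousLinearMap.comp_apply,
    ContinuousLinearMap.flip_apply, ContinuousLinearMap.zero_apply, map_add, map_zero, hBAv]
  rw [hsym (g x) (f x)]
  linarith [hkey]

/-- **Invariance of the matrix `S` under coordinate changes.**
Let `O ⊆ ℝⁿ` be open, `f₁, f₂` be `C¹` vector fields on `O`, `h` be `C²` on `O`, and let
`φ` be a `C²` diffeomorphism of `O` onto its open image, with inverse `ψ`. Transform the
data by `h̃ = h ∘ ψ` and `f̃ᵢ(φ x) = Dφ(x) fᵢ(x)`, i.e. `f̃ᵢ(y) = Dφ(ψ y) fᵢ(ψ y)`.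
Then `S̃(φ x) = S(x)` entrywise, for every `x ∈ O`. -/
theorem Smat_invariant_under_coordinate_change {n : ℕ}
    (O : Set (Euc n)) (hO : IsOpen O)
    (f₁ f₂ : Euc n → Euc n) (h : Euc n → ℝ) (φ ψ : Euc n → Euc n)
    (hf₁ : ContDiffOn ℝ 1 f₁ O) (hf₂ : ContDiffOn ℝ 1 f₂ O)
    (hh : ContDiffOn ℝ 2 h O)
    (hφ : ContDiffOn ℝ 2 φ O) (hφO : IsOpen (φ '' O))
    (hψ : ContDiffOn ℝ 2 ψ (φ '' O))
    (hinv₁ : ∀ x ∈ O, ψ (φ x) = x) (hinv₂ : ∀ y ∈ φ '' O, φ (ψ y) = y)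
    (x : Euc n) (hx : x ∈ O) (l m : Fin 2) :
    Smat (fun y => fderiv ℝ φ (ψ y) (f₁ (ψ y))) (fun y => fderiv ℝ φ (ψ y) (f₂ (ψ y)))
        (h ∘ ψ) (φ x) l m
      = Smat f₁ f₂ h x l m := by
  have key' := fun (f g : Euc n → Euc n) (hf : ContDiffOn ℝ 1 f O) (hg : ContDiffOn ℝ 1 g O) =>
    key O hO f g h φ ψ hf hg hh hφ hφO hψ hinv₁ x hx
  fin_cases l <;> fin_cases m <;>
    simp only [Smat, Matrix.cons_val_zero, Matrix.cons_val_one, Matrix.head_cons] <;>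
    [exact key' f₁ f₁ hf₁ hf₁; exact key' f₁ f₂ hf₁ hf₂; exact key' f₂ f₁ hf₂ hf₁;
     exact key' f₂ f₂ hf₂ hf₂]

end
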